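/- arXiv:2410.10677 — 4 statements merged into one kernel-verified Lean document; each statement's English description precedes it below -/
import Mathlib

section
/- Let M be a metric space, Y a normed linear space, and x ∈ M. The map Φ_x : ℓ_∞(M, Y) → Lip^x(M, Y), defined by Φ_x(f)(x') = d(x', x)·f(x') + f(x), is a surjective linear isometry from (ℓ_∞(M,Y), ‖·‖_∞) onto (Lip^x(M, Y), ‖·‖_{L^x}). -/
open scoped Topology

section

variable {M Y : Type*} [MetricSpace M] [NormedAddCommGroup Y] [NormedSpace ℝ Y]

/-- `f` is Lipschitz at `x`. -/
def LipAt (x : M) (f : M → Y) : Prop :=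
  ∃ k > (0 : ℝ), ∀ x' : M, ‖f x' - f x‖ ≤ k * dist x' x

/-- `f` is a bounded function. -/
def IsBddFun (f : M → Y) : Prop := ∃ C : ℝ, ∀ x' : M, ‖f x'‖ ≤ C

/-- sup norm `‖f‖_∞`. -/
noncomputable def supNorm (f : M → Y) : ℝ := ⨆ x' : M, ‖f x'‖

/-- the seminorm `‖f‖_x`. -/
noncomputable def normAt (x : M) (f : M → Y) : ℝ :=
  ⨆ x' : {x' : M // x' ≠ x}, ‖f x'.1 - f x‖ / dist x'.1 x

/-- the norm `‖f‖_{L^x} = max {‖f‖_x, ‖f(x)‖}.` -/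
noncomputable def normLAt (x : M) (f : M → Y) : ℝ := max (normAt x f) ‖f x‖

/-- The map `Φ_x`. -/
noncomputable def PhiMap (x : M) (f : M → Y) : M → Y :=
  fun x' => dist x' x • f x' + f x

end

lemma phi_diff {M Y : Type*} [MetricSpace M] [NormedAddCommGroup Y] [NormedSpace ℝ Y]
    (x x' : M) (f : M → Y) : PhiMap x f x' - PhiMap x f x = dist x' x • f x' := by
  simp [PhiMap]

theorem Phi_surjective_linear_isometry {M Y : Type*} [MetricSpace M]
    [NormedAddCommGroup Y] [NormedSpace ℝ Y] (x : M) :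
    (∀ f : M → Y, IsBddFun f → LipAt x (PhiMap x f)) ∧
    (∀ f g : M → Y, PhiMap x (f + g) = PhiMap x f + PhiMap x g) ∧
    (∀ (c : ℝ) (f : M → Y), PhiMap x (c • f) = c • PhiMap x f) ∧
    (∀ f : M → Y, IsBddFun f → normLAt x (PhiMap x f) = supNorm f) ∧
    (∀ g : M → Y, LipAt x g → ∃ f : M → Y, IsBddFun f ∧ PhiMap x f = g) := by
  refine ⟨?_, ?_, ?_, ?_, ?_⟩
  · rintro f ⟨C, hC⟩
    refine ⟨max C 1, lt_max_of_lt_right one_pos, fun x' => ?_⟩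
    rw [phi_diff, norm_smul, Real.norm_eq_abs, abs_of_nonneg dist_nonneg, mul_comm]
    exact mul_le_mul_of_nonneg_right (le_trans (hC x') (le_max_left _ _)) dist_nonneg
  · intro f g
    funext x'
    simp only [PhiMap, Pi.add_apply, smul_add]
    abel
  · intro c f
    funext x'
    simp only [PhiMap, Pi.smul_apply, smul_add, smul_comm (dist x' x) c]
  · rintro f ⟨C, hC⟩
    have hC0 : (0:ℝ) ≤ C := le_trans (norm_nonneg _) (hC x)
    have hbdd : BddAbove (Set.range fun x' : M => ‖f x'‖) := by
      refine ⟨C, ?_⟩; rintro _ ⟨x', rfl⟩; exact hC x'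
    have hx : PhiMap x f x = f x := by simp [PhiMap]
    have key : normAt x (PhiMap x f) = ⨆ x' : {x' : M // x' ≠ x}, ‖f x'.1‖ := by
      unfold normAt
      refine iSup_congr fun x' => ?_
      rw [phi_diff, norm_smul, Real.norm_eq_abs, abs_of_nonneg dist_nonneg,
        mul_comm, mul_div_cancel_right₀ _ (ne_of_gt (dist_pos.mpr x'.2))]
    rw [normLAt, key, hx]
    apply le_antisymm
    · apply max_le
      · apply Real.iSup_le
        · intro x'
          exact le_ciSup hbdd x'.1
        · exact le_trans (norm_nonneg (f x)) (le_ciSup hbdd x)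
      · exact le_ciSup hbdd x
    · apply Real.iSup_le
      · intro x'
        by_cases h : x' = x
        · subst h; exact le_max_right _ _
        · exact le_trans (le_ciSup (⟨C, by rintro _ ⟨y, rfl⟩; exact hC y.1⟩ :
            BddAbove (Set.range fun y : {x' : M // x' ≠ x} => ‖f y.1‖)) ⟨x', h⟩)
            (le_max_left _ _)
      · exact le_trans (norm_nonneg (f x)) (le_max_right _ _)
  · rintro g ⟨k, hk, hg⟩
    classical
    refine ⟨fun x' => if h : x' = x then g x else (dist x' x)⁻¹ • (g x' - g x), ?_, ?_⟩
    · refine ⟨max k ‖g x‖, fun x' => ?_⟩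
      by_cases h : x' = x
      · simp [h]
      · simp only [h, dif_neg, not_false_iff]
        rw [norm_smul, Real.norm_eq_abs, abs_of_nonneg (inv_nonneg.mpr dist_nonneg)]
        have hd : 0 < dist x' x := dist_pos.mpr h
        refine le_trans ?_ (le_max_left k _)
        rw [inv_mul_le_iff₀ hd, mul_comm]
        exact hg x'
    · funext x'
      by_cases h : x' = x
      · subst h; simp [PhiMap]
      · simp only [PhiMap, h, dif_neg, not_false_iff, dif_pos]
        rw [smul_smul, mul_inv_cancel₀ (ne_of_gt (dist_pos.mpr h)), one_smul]
        abel
end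

section
/- Let X and Y be normed linear spaces and B_X the closed unit ball of X. Then (E(B_X, Y), ‖·‖_e) embeds isometrically and linearly into (E(X, Y), ‖·‖_e) via f ↦ f ∘ G, where G(x) = x for ‖x‖ ≤ 1 and G(x) = x/‖x‖ for ‖x‖ > 1. -/
section

variable {X Y : Type*} [NormedAddCommGroup X] [NormedSpace ℝ X]
  [NormedAddCommGroup Y] [NormedSpace ℝ Y]

/-- The retraction `G : X → B_X`, `G x = x` if `‖x‖ ≤ 1` and `G x = x/‖x‖`
otherwise. -/
noncomputable def GMap (x : X) : (Metric.closedBall (0 : X) 1) :=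
  if h : ‖x‖ ≤ 1 then ⟨x, by simpa [Metric.mem_closedBall, dist_zero_right] using h⟩
  else ⟨‖x‖⁻¹ • x, by
    push_neg at h
    have hx : ‖x‖ ≠ 0 := ne_of_gt (lt_trans one_pos h)
    simp [Metric.mem_closedBall, dist_zero_right, norm_smul,
      abs_of_nonneg (inv_nonneg.mpr (norm_nonneg x)), inv_mul_cancel₀ hx]⟩

/-- The base point of `B_X`. -/
def ballZero : (Metric.closedBall (0 : X) 1) :=
  ⟨0, Metric.mem_closedBall_self zero_le_one⟩

/-- Extensive boundedness on `B_X`. -/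
def ExtBddBall (f : (Metric.closedBall (0 : X) 1) → Y) : Prop :=
  ∃ k > (0 : ℝ), ∀ x, ‖f x‖ ≤ k * dist x (ballZero (X := X))

/-- Extensive boundedness on `X`. -/
def ExtBddX (f : X → Y) : Prop := ∃ k > (0 : ℝ), ∀ x : X, ‖f x‖ ≤ k * ‖x‖

/-- `‖·‖_e` on `E(B_X, Y)`. -/
noncomputable def eNormBall (f : (Metric.closedBall (0 : X) 1) → Y) : ℝ :=
  ⨆ x : {x : (Metric.closedBall (0 : X) 1) // x ≠ ballZero (X := X)},
    ‖f x.1‖ / dist x.1 (ballZero (X := X))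

/-- `‖·‖_e` on `E(X, Y)`. -/
noncomputable def eNormX (f : X → Y) : ℝ :=
  ⨆ x : {x : X // x ≠ 0}, ‖f x.1‖ / ‖x.1‖

lemma aux_dist_ballZero (y : Metric.closedBall (0 : X) 1) :
    dist y (ballZero (X := X)) = ‖(y : X)‖ := by
  rw [Subtype.dist_eq]
  simp [ballZero]

lemma aux_GMap_coe (y : Metric.closedBall (0 : X) 1) : GMap (y : X) = y := by
  have h : ‖(y : X)‖ ≤ 1 := by
    have := Metric.mem_closedBall.mp y.2; rwa [dist_zero_right] at this
  simp [GMap, h]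

lemma aux_norm_GMap_le (x : X) : ‖(GMap x : X)‖ ≤ ‖x‖ := by
  by_cases h : ‖x‖ ≤ 1
  · simp [GMap, h]
  · push_neg at h
    have hx : ‖x‖ ≠ 0 := ne_of_gt (lt_trans one_pos h)
    rw [GMap, dif_neg (not_le.mpr h)]
    simp only [norm_smul, Real.norm_eq_abs,
      abs_of_nonneg (inv_nonneg.mpr (norm_nonneg x)), inv_mul_cancel₀ hx]
    linarith

lemma aux_GMap_ne (x : X) (hx : x ≠ 0) : GMap x ≠ ballZero (X := X) := by
  intro h
  have h0 : (GMap x : X) = 0 := by rw [h]; rfl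
  by_cases hle : ‖x‖ ≤ 1
  · rw [GMap, dif_pos hle] at h0
    exact hx h0
  · rw [GMap, dif_neg hle] at h0
    push_neg at hle
    have hn : ‖x‖ ≠ 0 := ne_of_gt (lt_trans one_pos hle)
    simp only [smul_eq_zero, inv_eq_zero] at h0
    rcases h0 with h0 | h0
    · exact hn h0
    · exact hx h0

end

/-- `(E(B_X,Y), ‖·‖_e)` embeds isometrically and linearly into `(E(X,Y), ‖·‖_e)`
via `f ↦ f ∘ G`. -/
theorem extBdd_ball_embeds {X Y : Type*} [NormedAddCommGroup X] [NormedSpace ℝ X]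
    [NormedAddCommGroup Y] [NormedSpace ℝ Y] :
    (∀ f : (Metric.closedBall (0 : X) 1) → Y, ExtBddBall f →
      ExtBddX (fun x => f (GMap x)) (Y := Y)) ∧
    (∀ f g : (Metric.closedBall (0 : X) 1) → Y,
      (fun x : X => (f + g) (GMap x)) =
        (fun x => f (GMap x)) + fun x => g (GMap x)) ∧
    (∀ (c : ℝ) (f : (Metric.closedBall (0 : X) 1) → Y),
      (fun x : X => (c • f) (GMap x)) = c • fun x => f (GMap x)) ∧
    (∀ f : (Metric.closedBall (0 : X) 1) → Y, ExtBddBall f →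
      eNormX (fun x => f (GMap x)) = eNormBall f) ∧
    (∀ f g : (Metric.closedBall (0 : X) 1) → Y,
      (fun x : X => f (GMap x)) = (fun x : X => g (GMap x)) → f = g) := by
  have hne : ∀ (y : Metric.closedBall (0 : X) 1), y ≠ ballZero (X := X) → (y : X) ≠ 0 := by
    intro y hy hc
    exact hy (Subtype.ext hc)
  refine ⟨?_, ?_, ?_, ?_, ?_⟩
  · rintro f ⟨k, hk, hb⟩
    refine ⟨k, hk, fun x => ?_⟩
    have h1 := hb (GMap x)
    rw [aux_dist_ballZero] at h1
    exact h1.trans (mul_le_mul_of_nonneg_left (aux_norm_GMap_le x) hk.le)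
  · intro f g; rfl
  · intro c f; rfl
  · rintro f ⟨k, hk, hb⟩
    by_cases hX : Nonempty {x : X // x ≠ 0}
    · have hballne : Nonempty {y : Metric.closedBall (0 : X) 1 // y ≠ ballZero (X := X)} := by
        obtain ⟨x, hx⟩ := hX
        exact ⟨⟨GMap x, aux_GMap_ne x hx⟩⟩
      have hfb : ∀ x : X, ‖f (GMap x)‖ ≤ k * ‖x‖ := by
        intro x
        have h1 := hb (GMap x)
        rw [aux_dist_ballZero] at h1
        exact h1.trans (mul_le_mul_of_nonneg_left (aux_norm_GMap_le x) hk.le)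
      have bddX : BddAbove (Set.range fun x : {x : X // x ≠ 0} =>
          ‖f (GMap x.1)‖ / ‖x.1‖) := by
        refine ⟨k, ?_⟩
        rintro _ ⟨x, rfl⟩
        have hpos : (0 : ℝ) < ‖x.1‖ := norm_pos_iff.mpr x.2
        exact (div_le_iff₀ hpos).mpr (hfb x.1)
      have bddB : BddAbove (Set.range fun y : {y : Metric.closedBall (0 : X) 1 //
          y ≠ ballZero (X := X)} => ‖f y.1‖ / dist y.1 (ballZero (X := X))) := by
        refine ⟨k, ?_⟩
        rintro _ ⟨y, rfl⟩
        have hpos : (0 : ℝ) < dist y.1 (ballZero (X := X)) := by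
          rw [aux_dist_ballZero]
          exact norm_pos_iff.mpr (hne y.1 y.2)
        exact (div_le_iff₀ hpos).mpr (hb y.1)
      refine le_antisymm ?_ ?_
      · apply ciSup_le
        rintro ⟨x, hx⟩
        have hGne := aux_GMap_ne x hx
        have hd : dist (GMap x) (ballZero (X := X)) = ‖(GMap x : X)‖ :=
          aux_dist_ballZero _
        have hstep : ‖f (GMap x)‖ / ‖x‖ ≤ ‖f (GMap x)‖ / dist (GMap x) (ballZero (X := X)) := by
          rw [hd]
          have h0 : (0 : ℝ) < ‖(GMap x : X)‖ := norm_pos_iff.mpr (hne _ hGne)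
          exact div_le_div_of_nonneg_left (norm_nonneg _) h0 (aux_norm_GMap_le x)
        exact hstep.trans (le_ciSup bddB ⟨GMap x, hGne⟩)
      · apply ciSup_le
        rintro ⟨y, hy⟩
        have hxne : (y : X) ≠ 0 := hne y hy
        have : ‖f y‖ / dist y (ballZero (X := X)) =
            ‖f (GMap (y : X))‖ / ‖(y : X)‖ := by
          rw [aux_GMap_coe, aux_dist_ballZero]
        rw [this]
        exact le_ciSup bddX ⟨(y : X), hxne⟩
    · have hballe : IsEmpty {y : Metric.closedBall (0 : X) 1 // y ≠ ballZero (X := X)} := by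
        constructor
        rintro ⟨y, hy⟩
        exact hX ⟨⟨(y : X), hne y hy⟩⟩
      rw [not_nonempty_iff] at hX
      rw [eNormX, eNormBall, Real.iSup_of_isEmpty, Real.iSup_of_isEmpty]
  · intro f g h
    funext y
    have h1 := congrFun h (y : X)
    simpa [aux_GMap_coe] using h1
end

section
/- Let M be a pointed metric space with base point 0. For x ∈ M, the evaluation functional x̌ : M^e → ℝ, x̌(f) = f(x), is a bounded linear functional on M^e with ‖x̌‖ = d(x, 0). Moreover for any x, y ∈ M, ‖x̌ − y̌‖ ≥ d(x, y). -/
section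

variable {M : Type*} [MetricSpace M]

/-- Membership in `M^e = E_c(M, ℝ)`: continuous, extensively bounded real
functions (with base point `z`; note the bound forces `f z = 0`). -/
def MemEc (z : M) (f : M → ℝ) : Prop :=
  Continuous f ∧ ∃ k > (0 : ℝ), ∀ x : M, |f x| ≤ k * dist x z

/-- The norm `‖f‖_e` on `M^e`. -/
noncomputable def eNormR (z : M) (f : M → ℝ) : ℝ :=
  ⨆ x : {x : M // x ≠ z}, |f x.1| / dist x.1 z

end

private lemma memEc_le {M : Type*} [MetricSpace M] {z : M} {f : M → ℝ}
    (hf : MemEc z f) (t : M) : |f t| ≤ eNormR z f * dist t z := by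
  obtain ⟨-, k, hk, hb⟩ := hf
  rcases eq_or_ne t z with rfl | ht
  · simpa using hb t
  · have hpos : 0 < dist t z := dist_pos.mpr ht
    have hbdd : BddAbove (Set.range fun u : {x : M // x ≠ z} => |f u.1| / dist u.1 z) := by
      refine ⟨k, ?_⟩
      rintro r ⟨u, rfl⟩
      have hu : 0 < dist u.1 z := dist_pos.mpr u.2
      exact (div_le_iff₀ hu).mpr (hb u.1)
    have h := le_ciSup hbdd (⟨t, ht⟩ : {x : M // x ≠ z})
    exact (div_le_iff₀ hpos).mp h

/-- For `x ∈ M` the evaluation `x̌ : M^e → ℝ`, `x̌(f) = f(x)`, is a bounded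
(linear) functional with dual norm `‖x̌‖ = d(x, 0)`; moreover
`‖x̌ - y̌‖ ≥ d(x,y)`. The dual norms are expressed as suprema over the unit
ball of `M^e`. -/
theorem evaluation_functional_norm {M : Type*} [MetricSpace M] (z x y : M) :
    (∀ f : M → ℝ, MemEc z f → |f x| ≤ eNormR z f * dist x z) ∧
    sSup {r : ℝ | ∃ f : M → ℝ, MemEc z f ∧ eNormR z f ≤ 1 ∧ r = |f x|} =
      dist x z ∧
    dist x y ≤
      sSup {r : ℝ | ∃ f : M → ℝ, MemEc z f ∧ eNormR z f ≤ 1 ∧ r = |f x - f y|} := by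
  refine ⟨fun f hf => memEc_le hf x, ?_, ?_⟩
  · -- the witness function `t ↦ dist t z`
    have hmem : MemEc z (fun t : M => dist t z) := by
      refine ⟨continuous_id.dist continuous_const, 1, one_pos, fun t => ?_⟩
      simp [abs_of_nonneg dist_nonneg]
    have hnorm : eNormR z (fun t : M => dist t z) ≤ 1 := by
      refine Real.iSup_le (fun u => ?_) zero_le_one
      have hu : dist u.1 z ≠ 0 := ne_of_gt (dist_pos.mpr u.2)
      rw [abs_of_nonneg dist_nonneg, div_self hu]
    refine le_antisymm (Real.sSup_le ?_ dist_nonneg) ?_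
    · rintro r ⟨f, hf, h1, rfl⟩
      calc |f x| ≤ eNormR z f * dist x z := memEc_le hf x
        _ ≤ 1 * dist x z := mul_le_mul_of_nonneg_right h1 dist_nonneg
        _ = dist x z := one_mul _
    · refine le_csSup ⟨dist x z, ?_⟩ ?_
      · rintro r ⟨f, hf, h1, rfl⟩
        calc |f x| ≤ eNormR z f * dist x z := memEc_le hf x
          _ ≤ 1 * dist x z := mul_le_mul_of_nonneg_right h1 dist_nonneg
          _ = dist x z := one_mul _
      · exact ⟨fun t : M => dist t z, hmem, hnorm,
          (abs_of_nonneg dist_nonneg).symm⟩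
  · -- the witness function `t ↦ dist t y - dist z y`
    have hmem : MemEc z (fun t : M => dist t y - dist z y) := by
      refine ⟨(continuous_id.dist continuous_const).sub continuous_const, 1, one_pos,
        fun t => ?_⟩
      simpa using abs_dist_sub_le t z y
    have hnorm : eNormR z (fun t : M => dist t y - dist z y) ≤ 1 := by
      refine Real.iSup_le (fun u => ?_) zero_le_one
      have hu : 0 < dist u.1 z := dist_pos.mpr u.2
      rw [div_le_one hu]
      simpa using abs_dist_sub_le u.1 z y
    refine le_csSup ⟨dist x z + dist y z, ?_⟩ ?_
    · rintro r ⟨f, hf, h1, rfl⟩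
      have hx := memEc_le hf x
      have hy := memEc_le hf y
      have hx' : |f x| ≤ dist x z := by
        calc |f x| ≤ eNormR z f * dist x z := hx
          _ ≤ 1 * dist x z := mul_le_mul_of_nonneg_right h1 dist_nonneg
          _ = dist x z := one_mul _
      have hy' : |f y| ≤ dist y z := by
        calc |f y| ≤ eNormR z f * dist y z := hy
          _ ≤ 1 * dist y z := mul_le_mul_of_nonneg_right h1 dist_nonneg
          _ = dist y z := one_mul _
      calc |f x - f y| ≤ |f x| + |f y| := abs_sub _ _
        _ ≤ dist x z + dist y z := add_le_add hx' hy'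
    · refine ⟨fun t : M => dist t y - dist z y, hmem, hnorm, ?_⟩
      have : dist x y - dist z y - (dist y y - dist z y) = dist x y := by
        simp
      rw [this, abs_of_nonneg dist_nonneg]
end

section
/- Let M, N be pointed metric spaces, 1 ≤ p < ∞, and T ∈ E_c(M, N). Then T̂ : ℓ_p^e(M) → ℓ_p^e(N) defined by T̂((x_n)) = (T(x_n)) is well defined, is Lipschitz with T̂(0) = 0, and satisfies d_e(T, 0) ≤ d_e(T̂, 0) ≤ Lip(T̂) ≤ d_e(T, 0), so Lip(T̂) = d_e(T, 0); moreover T ↦ T̂ is injective. -/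
section

variable {M N : Type*} [MetricSpace M] [MetricSpace N]

/-- Membership in `E_c(M, N)`. -/
def MemEcMap (z : M) (zN : N) (T : M → N) : Prop :=
  Continuous T ∧ ∃ k > (0 : ℝ), ∀ x : M, dist (T x) zN ≤ k * dist x z

/-- `d_e(T, 0) = sup_{x ≠ 0} d(T x, 0)/d(x, 0)`. -/
noncomputable def deZero (z : M) (zN : N) (T : M → N) : ℝ :=
  ⨆ x : {x : M // x ≠ z}, dist (T x.1) zN / dist x.1 z

/-- The metric `d_p` on `ℓ_p^e(M)` (sup over the unit ball of `M^e`). -/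
noncomputable def dpDist (z : M) (p : ℝ) (x y : ℕ → M) : ℝ :=
  ⨆ f : {f : M → ℝ // MemEc z f ∧ eNormR z f ≤ 1},
    (∑' n : ℕ, |f.1 (x n) - f.1 (y n)| ^ p) ^ (1 / p)

/-- Membership in `ℓ_p^e(M)`. -/
def Memlpe (z : M) (p : ℝ) (x : ℕ → M) : Prop :=
  ∃ C : ℝ, ∀ f : M → ℝ, MemEc z f → eNormR z f ≤ 1 →
    (∑' n : ℕ, |f (x n)| ^ p) ≤ C

end

section
variable {M N : Type*} [MetricSpace M] [MetricSpace N]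

lemma abs_le_dist_of_unit {z : M} {f : M → ℝ} (hf : MemEc z f) (h1 : eNormR z f ≤ 1)
    (w : M) : |f w| ≤ dist w z := by
  obtain ⟨hc, k, hk, hkb⟩ := hf
  by_cases hw : w = z
  · have := hkb w
    rw [hw, dist_self, mul_zero] at this
    rw [hw, dist_self]
    exact this
  · have hd : 0 < dist w z := dist_pos.2 hw
    have hbdd : BddAbove (Set.range fun x : {x : M // x ≠ z} => |f x.1| / dist x.1 z) := by
      refine ⟨k, ?_⟩
      rintro _ ⟨x, rfl⟩
      exact (div_le_iff₀ (dist_pos.2 x.2)).2 (hkb x.1)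
    have h2 : |f w| / dist w z ≤ eNormR z f :=
      le_ciSup hbdd (⟨w, hw⟩ : {x : M // x ≠ z})
    exact (div_le_one hd).1 (h2.trans h1)

lemma apply_base_eq_zero {z : M} {f : M → ℝ} (hf : MemEc z f) : f z = 0 := by
  obtain ⟨hc, k, hk, hkb⟩ := hf
  have := hkb z
  simp only [dist_self, mul_zero] at this
  exact abs_eq_zero.1 (le_antisymm this (abs_nonneg _))

lemma memEc_distfun (z : M) : MemEc z (fun w => dist w z) ∧ eNormR z (fun w => dist w z) ≤ 1 := by
  refine ⟨⟨Continuous.dist continuous_id continuous_const, 1, one_pos, fun x => by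
    simp [abs_of_nonneg dist_nonneg]⟩, ?_⟩
  refine Real.iSup_le (fun x => ?_) zero_le_one
  rw [abs_of_nonneg dist_nonneg, div_self (dist_pos.2 x.2).ne']

lemma dpDist_nonneg (z : M) (p : ℝ) (x y : ℕ → M) : 0 ≤ dpDist z p x y :=
  Real.iSup_nonneg fun _ =>
    Real.rpow_nonneg (tsum_nonneg fun _ => Real.rpow_nonneg (abs_nonneg _) _) _

lemma dpDist_comp_le {z : M} {zN : N} {p : ℝ} (hp : 1 ≤ p) {T : M → N} (hTcont : Continuous T)
    {c : ℝ} (hc : 0 ≤ c) (hTc : ∀ x, dist (T x) zN ≤ c * dist x z) (a b : ℕ → M)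
    (hbdd : BddAbove (Set.range fun f : {f : M → ℝ // MemEc z f ∧ eNormR z f ≤ 1} =>
      (∑' n : ℕ, |f.1 (a n) - f.1 (b n)| ^ p) ^ (1 / p))) :
    dpDist zN p (fun n => T (a n)) (fun n => T (b n)) ≤ c * dpDist z p a b := by
  have hp0 : p ≠ 0 := by positivity
  refine Real.iSup_le (fun f => ?_)
    (mul_nonneg hc (dpDist_nonneg z p a b))
  show (∑' n : ℕ, |f.1 (T (a n)) - f.1 (T (b n))| ^ p) ^ (1 / p) ≤ c * dpDist z p a b
  rcases eq_or_lt_of_le hc with h0 | hcpos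
  · have hz : ∀ x, T x = zN := fun x => by
      have := hTc x
      rw [← h0, zero_mul] at this
      exact dist_le_zero.1 this
    simp only [hz, sub_self, abs_zero, Real.zero_rpow hp0, tsum_zero,
      Real.zero_rpow (one_div_ne_zero hp0)]
    exact mul_nonneg hc (dpDist_nonneg z p a b)
  · set g : M → ℝ := fun w => f.1 (T w) / c with hg
    have hgb : ∀ w, |g w| ≤ dist w z := by
      intro w
      have h1 : |f.1 (T w)| ≤ c * dist w z :=
        (abs_le_dist_of_unit f.2.1 f.2.2 (T w)).trans (hTc w)
      rw [hg]
      simp only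
      rw [abs_div, abs_of_pos hcpos, div_le_iff₀ hcpos]
      linarith
    have hgmem : MemEc z g :=
      ⟨(f.2.1.1.comp hTcont).div_const c, 1, one_pos, fun x => by rw [one_mul]; exact hgb x⟩
    have hg1 : eNormR z g ≤ 1 :=
      Real.iSup_le (fun x => (div_le_one (dist_pos.2 x.2)).2 (hgb x.1)) zero_le_one
    have key : ∀ n : ℕ, |f.1 (T (a n)) - f.1 (T (b n))| ^ p = c ^ p * |g (a n) - g (b n)| ^ p := by
      intro n
      have h2 : f.1 (T (a n)) - f.1 (T (b n)) = c * (g (a n) - g (b n)) := by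
        rw [hg]; field_simp
      rw [h2, abs_mul, abs_of_pos hcpos, Real.mul_rpow hcpos.le (abs_nonneg _)]
    have hsnn : 0 ≤ ∑' n : ℕ, |g (a n) - g (b n)| ^ p :=
      tsum_nonneg fun _ => Real.rpow_nonneg (abs_nonneg _) _
    calc (∑' n : ℕ, |f.1 (T (a n)) - f.1 (T (b n))| ^ p) ^ (1 / p)
        = (c ^ p * ∑' n : ℕ, |g (a n) - g (b n)| ^ p) ^ (1 / p) := by
          rw [← tsum_mul_left]
          exact congrArg (· ^ (1/p)) (tsum_congr key)
      _ = c * (∑' n : ℕ, |g (a n) - g (b n)| ^ p) ^ (1 / p) := by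
          rw [Real.mul_rpow (Real.rpow_nonneg hcpos.le p) hsnn, one_div,
            Real.rpow_rpow_inv hcpos.le hp0]
      _ ≤ c * dpDist z p a b :=
          mul_le_mul_of_nonneg_left (le_ciSup hbdd ⟨g, hgmem, hg1⟩) hcpos.le

lemma ratio_le {z : M} {zN : N} {p : ℝ} (hp : 1 ≤ p) {T : M → N} (hTcont : Continuous T)
    {c : ℝ} (hc : 0 ≤ c) (hTc : ∀ x, dist (T x) zN ≤ c * dist x z) (a b : ℕ → M) :
    dpDist zN p (fun n => T (a n)) (fun n => T (b n)) / dpDist z p a b ≤ c := by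
  rcases eq_or_lt_of_le (dpDist_nonneg z p a b) with h0 | hpos
  · rw [← h0, div_zero]; exact hc
  · have hbdd : BddAbove (Set.range fun f : {f : M → ℝ // MemEc z f ∧ eNormR z f ≤ 1} =>
        (∑' n : ℕ, |f.1 (a n) - f.1 (b n)| ^ p) ^ (1 / p)) := by
      by_contra hn
      have h1 : dpDist z p a b = 0 := Real.iSup_of_not_bddAbove hn
      exact absurd h1 hpos.ne'
    rw [div_le_iff₀ hpos]
    exact dpDist_comp_le hp hTcont hc hTc a b hbdd

lemma tsum_single_seq {z : M} {p : ℝ} (hp : 1 ≤ p) {f : M → ℝ} (hf : MemEc z f) (x : M) :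
    (∑' n : ℕ, |f (if n = 0 then x else z)| ^ p) = |f x| ^ p := by
  have hp0 : p ≠ 0 := by positivity
  have hz := apply_base_eq_zero hf
  rw [tsum_eq_single 0 ?_]
  · simp
  · intro n hn
    rw [if_neg hn, hz, abs_zero, Real.zero_rpow hp0]

lemma dpDist_single {z : M} {p : ℝ} (hp : 1 ≤ p) (x : M) :
    dpDist z p (fun n => if n = 0 then x else z) (fun _ => z) = dist x z := by
  have hp0 : p ≠ 0 := by positivity
  have hterm : ∀ f : {f : M → ℝ // MemEc z f ∧ eNormR z f ≤ 1},
      (∑' n : ℕ, |f.1 ((fun n => if n = 0 then x else z) n) - f.1 ((fun _ : ℕ => z) n)| ^ p)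
        ^ (1 / p) = |f.1 x| := by
    intro f
    have h1 : (∑' n : ℕ, |f.1 ((fun n => if n = 0 then x else z) n) - f.1 ((fun _ : ℕ => z) n)| ^ p)
        = |f.1 x| ^ p := by
      simp only [apply_base_eq_zero f.2.1, sub_zero]
      exact tsum_single_seq hp f.2.1 x
    rw [h1, one_div, Real.rpow_rpow_inv (abs_nonneg _) hp0]
  apply le_antisymm
  · exact Real.iSup_le (fun f => (hterm f).le.trans (abs_le_dist_of_unit f.2.1 f.2.2 x)) dist_nonneg
  · have hbdd : BddAbove (Set.range fun f : {f : M → ℝ // MemEc z f ∧ eNormR z f ≤ 1} =>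
        (∑' n : ℕ, |f.1 ((fun n => if n = 0 then x else z) n) - f.1 ((fun _ : ℕ => z) n)| ^ p)
          ^ (1 / p)) := by
      refine ⟨dist x z, ?_⟩
      rintro _ ⟨f, rfl⟩
      beta_reduce
      rw [hterm f]
      exact abs_le_dist_of_unit f.2.1 f.2.2 x
    have h2 := le_ciSup hbdd
      (⟨fun w => dist w z, (memEc_distfun z).1, (memEc_distfun z).2⟩ :
        {f : M → ℝ // MemEc z f ∧ eNormR z f ≤ 1})
    rw [hterm] at h2
    simp only [abs_of_nonneg dist_nonneg] at h2
    exact h2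

lemma memlpe_single {z : M} {p : ℝ} (hp : 1 ≤ p) (x : M) :
    Memlpe z p (fun n => if n = 0 then x else z) := by
  refine ⟨dist x z ^ p, fun f hf h1 => ?_⟩
  rw [show (∑' n : ℕ, |f ((fun n => if n = 0 then x else z) n)| ^ p)
      = |f x| ^ p from tsum_single_seq hp hf x]
  exact Real.rpow_le_rpow (abs_nonneg _) (abs_le_dist_of_unit hf h1 x) (by linarith)

lemma memlpe_const {z : M} {p : ℝ} (hp : 1 ≤ p) : Memlpe z p (fun _ => z) := by
  have hp0 : p ≠ 0 := by positivity
  exact ⟨0, fun f hf h1 => by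
    simp [apply_base_eq_zero hf, Real.zero_rpow hp0]⟩

end

/-- For `T ∈ E_c(M, N)` and `1 ≤ p < ∞`, the dilation `T̂((x_n)) = (T(x_n))`
maps `ℓ_p^e(M)` into `ℓ_p^e(N)`, sends the base point to the base point, and
satisfies `d_e(T,0) ≤ d_e(T̂,0) ≤ Lip(T̂) ≤ d_e(T,0)`, so `Lip(T̂) = d_e(T,0)`;
moreover `T ↦ T̂` is injective. -/
theorem dilation_to_lipschitz {M N : Type*} [MetricSpace M] [MetricSpace N]
    (z : M) (zN : N) (p : ℝ) (hp : 1 ≤ p) (T : M → N) (hT : MemEcMap z zN T) :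
    (∀ x : ℕ → M, Memlpe z p x → Memlpe zN p (fun n => T (x n))) ∧
    T z = zN ∧
    (deZero z zN T ≤
        (⨆ x : {x : ℕ → M // Memlpe z p x ∧ x ≠ fun _ => z},
          dpDist zN p (fun n => T (x.1 n)) (fun _ => zN) /
            dpDist z p x.1 (fun _ => z)) ∧
      (⨆ x : {x : ℕ → M // Memlpe z p x ∧ x ≠ fun _ => z},
          dpDist zN p (fun n => T (x.1 n)) (fun _ => zN) /
            dpDist z p x.1 (fun _ => z)) ≤
        (⨆ q : {q : (ℕ → M) × (ℕ → M) // Memlpe z p q.1 ∧ Memlpe z p q.2 ∧ q.1 ≠ q.2},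
          dpDist zN p (fun n => T (q.1.1 n)) (fun n => T (q.1.2 n)) /
            dpDist z p q.1.1 q.1.2) ∧
      (⨆ q : {q : (ℕ → M) × (ℕ → M) // Memlpe z p q.1 ∧ Memlpe z p q.2 ∧ q.1 ≠ q.2},
          dpDist zN p (fun n => T (q.1.1 n)) (fun n => T (q.1.2 n)) /
            dpDist z p q.1.1 q.1.2) ≤ deZero z zN T) ∧
    (⨆ q : {q : (ℕ → M) × (ℕ → M) // Memlpe z p q.1 ∧ Memlpe z p q.2 ∧ q.1 ≠ q.2},
        dpDist zN p (fun n => T (q.1.1 n)) (fun n => T (q.1.2 n)) /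
          dpDist z p q.1.1 q.1.2) = deZero z zN T ∧
    (∀ S : M → N, MemEcMap z zN S →
      (∀ x : ℕ → M, Memlpe z p x →
        (fun n => T (x n)) = fun n => S (x n)) → T = S) := by
  obtain ⟨hTcont, k, hk, hkb⟩ := hT
  have hp0 : p ≠ 0 := by positivity
  have hTz : T z = zN := by
    have := hkb z
    rw [dist_self, mul_zero] at this
    exact dist_le_zero.1 this
  have hA0 : 0 ≤ deZero z zN T :=
    Real.iSup_nonneg fun _ => div_nonneg dist_nonneg dist_nonneg
  have hTA : ∀ x, dist (T x) zN ≤ deZero z zN T * dist x z := by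
    intro x
    by_cases hx : x = z
    · rw [hx, hTz, dist_self, dist_self, mul_zero]
    · have bddA : BddAbove (Set.range fun x : {x : M // x ≠ z} =>
          dist (T x.1) zN / dist x.1 z) := by
        refine ⟨k, ?_⟩
        rintro _ ⟨y, rfl⟩
        exact (div_le_iff₀ (dist_pos.2 y.2)).2 (hkb y.1)
      have h2 : dist (T x) zN / dist x z ≤ deZero z zN T :=
        le_ciSup bddA (⟨x, hx⟩ : {x : M // x ≠ z})
      exact (div_le_iff₀ (dist_pos.2 hx)).1 h2
  have hconst : (fun n : ℕ => T ((fun _ : ℕ => z) n)) = (fun _ : ℕ => zN) :=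
    funext fun _ => hTz
  have hBdd_L : BddAbove (Set.range
      fun q : {q : (ℕ → M) × (ℕ → M) // Memlpe z p q.1 ∧ Memlpe z p q.2 ∧ q.1 ≠ q.2} =>
        dpDist zN p (fun n => T (q.1.1 n)) (fun n => T (q.1.2 n)) /
          dpDist z p q.1.1 q.1.2) := by
    refine ⟨k, ?_⟩
    rintro _ ⟨q, rfl⟩
    exact ratio_le hp hTcont hk.le hkb q.1.1 q.1.2
  have hBdd_B : BddAbove (Set.range
      fun x : {x : ℕ → M // Memlpe z p x ∧ x ≠ fun _ => z} =>
        dpDist zN p (fun n => T (x.1 n)) (fun _ => zN) /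
          dpDist z p x.1 (fun _ => z)) := by
    refine ⟨k, ?_⟩
    rintro _ ⟨x, rfl⟩
    have h3 := ratio_le hp hTcont hk.le hkb x.1 (fun _ => z)
    rwa [hconst] at h3
  have hL_le_A : (⨆ q : {q : (ℕ → M) × (ℕ → M) //
        Memlpe z p q.1 ∧ Memlpe z p q.2 ∧ q.1 ≠ q.2},
      dpDist zN p (fun n => T (q.1.1 n)) (fun n => T (q.1.2 n)) /
        dpDist z p q.1.1 q.1.2) ≤ deZero z zN T :=
    Real.iSup_le (fun q => ratio_le hp hTcont hA0 hTA q.1.1 q.1.2) hA0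
  have hB_le_L : (⨆ x : {x : ℕ → M // Memlpe z p x ∧ x ≠ fun _ => z},
        dpDist zN p (fun n => T (x.1 n)) (fun _ => zN) /
          dpDist z p x.1 (fun _ => z)) ≤
      ⨆ q : {q : (ℕ → M) × (ℕ → M) // Memlpe z p q.1 ∧ Memlpe z p q.2 ∧ q.1 ≠ q.2},
        dpDist zN p (fun n => T (q.1.1 n)) (fun n => T (q.1.2 n)) /
          dpDist z p q.1.1 q.1.2 := by
    refine Real.iSup_le (fun x => ?_)
      (Real.iSup_nonneg fun q => div_nonneg (dpDist_nonneg _ _ _ _) (dpDist_nonneg _ _ _ _))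
    have h3 : dpDist zN p (fun n => T (x.1 n)) (fun n => T ((fun _ : ℕ => z) n)) /
        dpDist z p x.1 (fun _ => z) ≤
        ⨆ q : {q : (ℕ → M) × (ℕ → M) // Memlpe z p q.1 ∧ Memlpe z p q.2 ∧ q.1 ≠ q.2},
          dpDist zN p (fun n => T (q.1.1 n)) (fun n => T (q.1.2 n)) /
            dpDist z p q.1.1 q.1.2 :=
      le_ciSup hBdd_L ⟨(x.1, fun _ => z), x.2.1, memlpe_const hp, x.2.2⟩
    rwa [hconst] at h3
  have hA_le_B : deZero z zN T ≤
      ⨆ x : {x : ℕ → M // Memlpe z p x ∧ x ≠ fun _ => z},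
        dpDist zN p (fun n => T (x.1 n)) (fun _ => zN) /
          dpDist z p x.1 (fun _ => z) := by
    refine Real.iSup_le (fun x => ?_)
      (Real.iSup_nonneg fun y => div_nonneg (dpDist_nonneg _ _ _ _) (dpDist_nonneg _ _ _ _))
    have hne : (fun n : ℕ => if n = 0 then x.1 else z) ≠ fun _ => z := by
      intro h
      have := congrFun h 0
      simp only [if_pos rfl] at this
      exact x.2 this
    have hfun : (fun n : ℕ => T ((fun n : ℕ => if n = 0 then x.1 else z) n)) =
        fun n : ℕ => if n = 0 then T x.1 else zN := by
      funext n
      by_cases hn : n = 0 <;> simp [hn, hTz]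
    have hval : dpDist zN p (fun n => T ((fun n : ℕ => if n = 0 then x.1 else z) n))
          (fun _ => zN) /
        dpDist z p (fun n : ℕ => if n = 0 then x.1 else z) (fun _ => z) =
        dist (T x.1) zN / dist x.1 z := by
      rw [hfun, dpDist_single hp (T x.1), dpDist_single hp x.1]
    rw [← hval]
    exact le_ciSup hBdd_B ⟨fun n => if n = 0 then x.1 else z, memlpe_single hp x.1, hne⟩
  refine ⟨?_, hTz, ⟨hA_le_B, hB_le_L, hL_le_A⟩,
    le_antisymm hL_le_A (hA_le_B.trans hB_le_L), ?_⟩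
  · rintro x ⟨C, hC⟩
    refine ⟨k ^ p * C, fun f hf h1 => ?_⟩
    set g : M → ℝ := fun w => f (T w) / k with hg
    have hgb : ∀ w, |g w| ≤ dist w z := by
      intro w
      have h2 : |f (T w)| ≤ k * dist w z :=
        (abs_le_dist_of_unit hf h1 (T w)).trans (hkb w)
      rw [hg]
      simp only
      rw [abs_div, abs_of_pos hk, div_le_iff₀ hk]
      linarith
    have hgmem : MemEc z g :=
      ⟨(hf.1.comp hTcont).div_const k, 1, one_pos, fun w => by rw [one_mul]; exact hgb w⟩
    have hg1 : eNormR z g ≤ 1 :=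
      Real.iSup_le (fun w => (div_le_one (dist_pos.2 w.2)).2 (hgb w.1)) zero_le_one
    have key : ∀ n : ℕ, |f (T (x n))| ^ p = k ^ p * |g (x n)| ^ p := by
      intro n
      have h2 : f (T (x n)) = k * g (x n) := by
        rw [hg]; field_simp
      rw [h2, abs_mul, abs_of_pos hk, Real.mul_rpow hk.le (abs_nonneg _)]
    calc (∑' n : ℕ, |f ((fun n => T (x n)) n)| ^ p)
        = k ^ p * ∑' n : ℕ, |g (x n)| ^ p := by
          rw [← tsum_mul_left]
          exact tsum_congr key
      _ ≤ k ^ p * C :=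
          mul_le_mul_of_nonneg_left (hC g hgmem hg1) (Real.rpow_nonneg hk.le p)
  · intro S hS h
    funext m
    have h2 := h (fun n => if n = 0 then m else z) (memlpe_single hp m)
    have h3 := congrFun h2 0
    simpa using h3
end
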